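/- Negativity of the key cross integral: assume 0 < φ ≤ 1, 0 < μ ≤ ψ, ω > 0, and at least one of φ < 1 or μ < ψ. Then for all 0 < R⁻ < R⁺, one has I₁(R⁻,R⁺)·k_ms(R⁻) − I₂(R⁻,R⁺)·k_sm(R⁻) < 0; equivalently, ∫_{R⁻}^{R⁺} (1/r)·( k_sm(r)/k_sm(R⁻) − k_ms(r)/k_ms(R⁻) ) dr < 0. -/
import Mathlib


open Real Filter intervalIntegral

/-- Nondimensional stationary-to-moving switching rate. -/
noncomputable def ksm (φ R : ℝ) : ℝ := φ - (φ - 1) * Real.exp (-R)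

/-- Nondimensional moving-to-stationary switching rate. -/
noncomputable def kms (ψ μ ω R : ℝ) : ℝ := ψ - (ψ - μ) * Real.exp (-ω * R)

/-- I₁(a,b) = ∫_a^b k_sm(r)/r dr. -/
noncomputable def I1 (φ a b : ℝ) : ℝ := ∫ r in a..b, ksm φ r / r

/-- I₂(a,b) = ∫_a^b k_ms(r)/r dr. -/
noncomputable def I2 (ψ μ ω a b : ℝ) : ℝ := ∫ r in a..b, kms ψ μ ω r / r

/-- Negativity of the key cross integral:
I₁·k_ms(R⁻) − I₂·k_sm(R⁻) < 0, equivalently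
∫ (1/r)(k_sm(r)/k_sm(R⁻) − k_ms(r)/k_ms(R⁻)) dr < 0. -/
theorem cross_integral_neg (φ ψ μ ω : ℝ)
    (hφ0 : 0 < φ) (hφ1 : φ ≤ 1) (hμ0 : 0 < μ) (hμψ : μ ≤ ψ) (hω : 0 < ω)
    (hne : φ < 1 ∨ μ < ψ) :
    ∀ Rminus Rplus : ℝ, 0 < Rminus → Rminus < Rplus →
      I1 φ Rminus Rplus * kms ψ μ ω Rminus - I2 ψ μ ω Rminus Rplus * ksm φ Rminus < 0 ∧
      (∫ r in Rminus..Rplus,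
        (1 / r) * (ksm φ r / ksm φ Rminus - kms ψ μ ω r / kms ψ μ ω Rminus)) < 0 := by
  intro a b ha hab
  have hb : 0 < b := ha.trans hab
  set K := ksm φ a with hKdef
  set M := kms ψ μ ω a with hMdef
  have hK : 0 < K := by
    have := Real.exp_pos (-a)
    simp only [hKdef, ksm]; nlinarith
  have hM : 0 < M := by
    have h1 : Real.exp (-ω * a) ≤ 1 := by
      apply Real.exp_le_one_iff.mpr; nlinarith
    have h2 := Real.exp_pos (-ω * a)
    simp only [hMdef, kms]; nlinarith
  -- key pointwise strict inequality on (a, b)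
  have hpt : ∀ x ∈ Set.Ioo a b,
      0 < -((1 / x) * (ksm φ x / K - kms ψ μ ω x / M)) := by
    intro x hx
    have hx0 : 0 < x := ha.trans hx.1
    have hexp : Real.exp (-x) ≤ Real.exp (-a) := Real.exp_le_exp.mpr (by linarith [hx.1])
    have hexp2 : Real.exp (-ω * x) ≤ Real.exp (-ω * a) :=
      Real.exp_le_exp.mpr (by nlinarith [hx.1])
    have hKx : 0 < ksm φ x := by
      have := Real.exp_pos (-x); simp only [ksm]; nlinarith
    have hcross : ksm φ x * M < kms ψ μ ω x * K := by
      rcases hne with h | h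
      · -- ksm strictly decreasing
        have hstrict : Real.exp (-x) < Real.exp (-a) := Real.exp_lt_exp.mpr (by linarith [hx.1])
        have h1 : ksm φ x < K := by simp only [hKdef, ksm]; nlinarith
        have h2 : M ≤ kms ψ μ ω x := by simp only [hMdef, kms]; nlinarith
        nlinarith
      · -- kms strictly increasing
        have hstrict : Real.exp (-ω * x) < Real.exp (-ω * a) :=
          Real.exp_lt_exp.mpr (by nlinarith [hx.1])
        have h1 : ksm φ x ≤ K := by simp only [hKdef, ksm]; nlinarith
        have h2 : M < kms ψ μ ω x := by simp only [hMdef, kms]; nlinarith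
        nlinarith
    have hdiv : ksm φ x / K < kms ψ μ ω x / M := (div_lt_div_iff₀ hK hM).mpr hcross
    have : (1 / x) * (ksm φ x / K - kms ψ μ ω x / M) < 0 :=
      mul_neg_of_pos_of_neg (one_div_pos.mpr hx0) (by linarith)
    linarith
  -- continuity facts
  have hc1 : Continuous (ksm φ) := by
    unfold ksm; continuity
  have hc2 : Continuous (kms ψ μ ω) := by
    unfold kms; continuity
  have hne0 : ∀ x ∈ Set.uIcc a b, x ≠ 0 := by
    intro x hx
    rw [Set.uIcc_of_le hab.le] at hx
    exact (lt_of_lt_of_le ha hx.1).ne'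
  have hcont1 : ContinuousOn (fun r => ksm φ r / r) (Set.uIcc a b) :=
    (hc1.continuousOn).div continuousOn_id hne0
  have hcont2 : ContinuousOn (fun r => kms ψ μ ω r / r) (Set.uIcc a b) :=
    (hc2.continuousOn).div continuousOn_id hne0
  have hint1 : IntervalIntegrable (fun r => ksm φ r / r) MeasureTheory.volume a b :=
    hcont1.intervalIntegrable
  have hint2 : IntervalIntegrable (fun r => kms ψ μ ω r / r) MeasureTheory.volume a b :=
    hcont2.intervalIntegrable
  have hcontf : ContinuousOn
      (fun r => (1 / r) * (ksm φ r / K - kms ψ μ ω r / M)) (Set.uIcc a b) := by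
    apply ContinuousOn.mul
    · exact (continuousOn_const.div continuousOn_id hne0)
    · exact ((hc1.continuousOn).div_const K).sub ((hc2.continuousOn).div_const M)
  have hintf : IntervalIntegrable
      (fun r => (1 / r) * (ksm φ r / K - kms ψ μ ω r / M)) MeasureTheory.volume a b :=
    hcontf.intervalIntegrable
  -- second part: integral negative
  have hneg : (∫ r in a..b, (1 / r) * (ksm φ r / K - kms ψ μ ω r / M)) < 0 := by
    have hpos : 0 < ∫ r in a..b,
        -((1 / r) * (ksm φ r / K - kms ψ μ ω r / M)) :=
      intervalIntegral.intervalIntegral_pos_of_pos_on hintf.neg hpt hab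
    rw [intervalIntegral.integral_neg] at hpos
    linarith
  refine ⟨?_, hneg⟩
  -- rewrite integral as I1/K - I2/M
  have hrw : (∫ r in a..b, (1 / r) * (ksm φ r / K - kms ψ μ ω r / M))
      = I1 φ a b / K - I2 ψ μ ω a b / M := by
    rw [show (fun r => (1 / r) * (ksm φ r / K - kms ψ μ ω r / M))
        = fun r => (ksm φ r / r) / K - (kms ψ μ ω r / r) / M from funext fun r => by ring]
    rw [intervalIntegral.integral_sub (hint1.div_const K) (hint2.div_const M),
      intervalIntegral.integral_div, intervalIntegral.integral_div]
    rfl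
  rw [hrw] at hneg
  have h3 : I1 φ a b / K < I2 ψ μ ω a b / M := by linarith
  have h4 : I1 φ a b * M < I2 ψ μ ω a b * K := (div_lt_div_iff₀ hK hM).mp h3
  linarith
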